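/- Let q ≥ 2 and 1/2 < γ < 1. For n ∈ ℕ, the function g(r) = r^{qn + q/2 − (1−γ)}·e^{−qr}/(n!)^q on (0,∞) attains its maximum at r = a'_n := n + 1/2 − (1−γ)/q, and n^{1−γ}·g(a'_n) converges to (2π)^{−q/2} as n → ∞. -/

import Mathlib

open Real Filter Topology

lemma key_max (q a r : ℝ) (hq : 0 < q) (ha : 0 < a) (hr : 0 < r) :
    r ^ (q * a) * Real.exp (-q * r) ≤ a ^ (q * a) * Real.exp (-q * a) := by
  have hra : 0 < r / a := div_pos hr ha
  have h1 : r ^ (q * a) = a ^ (q * a) * (r / a) ^ (q * a) := by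
    rw [← Real.mul_rpow ha.le hra.le, mul_div_cancel₀ _ ha.ne']
  have h2 : (r / a) ^ (q * a) * Real.exp (-q * r) ≤ Real.exp (-q * a) := by
    rw [Real.rpow_def_of_pos hra, ← Real.exp_add, Real.exp_le_exp]
    have hlog : Real.log (r / a) ≤ r / a - 1 := Real.log_le_sub_one_of_pos hra
    have h3 : q * a * Real.log (r / a) ≤ q * a * (r / a - 1) :=
      mul_le_mul_of_nonneg_left hlog (by positivity)
    have h4 : q * a * (r / a - 1) = q * r - q * a := by field_simp
    linarith
  calc r ^ (q * a) * Real.exp (-q * r)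
      = a ^ (q * a) * ((r / a) ^ (q * a) * Real.exp (-q * r)) := by rw [h1]; ring
    _ ≤ a ^ (q * a) * Real.exp (-q * a) :=
        mul_le_mul_of_nonneg_left h2 (Real.rpow_pos_of_pos ha _).le

lemma one_plus_lim (d : ℝ) (hd : 0 < d) :
    Tendsto (fun n : ℕ => (1 + d / (n : ℝ)) ^ ((n : ℝ) + d)) atTop (𝓝 (Real.exp d)) := by
  have e1 := tendsto_one_add_div_rpow_exp d
  have e0 : Tendsto (fun x : ℝ => 1 + d / x) atTop (𝓝 1) := by
    simpa using tendsto_const_nhds.add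
      (tendsto_const_nhds.div_atTop (f := fun _ : ℝ => d) tendsto_id)
  have e2 : Tendsto (fun x : ℝ => (1 + d / x) ^ d) atTop (𝓝 1) := by
    simpa using e0.rpow_const (Or.inl one_ne_zero)
  have e3 : Tendsto (fun x : ℝ => (1 + d / x) ^ x * (1 + d / x) ^ d) atTop
      (𝓝 (Real.exp d)) := by simpa using e1.mul e2
  have e4 : Tendsto (fun x : ℝ => (1 + d / x) ^ (x + d)) atTop (𝓝 (Real.exp d)) := by
    apply e3.congr'
    filter_upwards [eventually_gt_atTop (0:ℝ)] with x hx
    rw [← Real.rpow_add (by positivity)]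
  exact e4.comp tendsto_natCast_atTop_atTop

theorem stmt_8 (q γ : ℝ) (hq : 2 ≤ q) (h1 : 1 / 2 < γ) (h2 : γ < 1) :
    (∀ n : ℕ, 1 ≤ n →
      IsMaxOn
        (fun r : ℝ =>
          r ^ (q * n + q / 2 - (1 - γ)) * Real.exp (-q * r) / (n.factorial : ℝ) ^ q)
        (Set.Ioi 0) ((n : ℝ) + 1 / 2 - (1 - γ) / q)) ∧
    Filter.Tendsto
      (fun n : ℕ =>
        (n : ℝ) ^ (1 - γ) *
          (((n : ℝ) + 1 / 2 - (1 - γ) / q) ^ (q * n + q / 2 - (1 - γ)) *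
              Real.exp (-q * ((n : ℝ) + 1 / 2 - (1 - γ) / q)) / (n.factorial : ℝ) ^ q))
      Filter.atTop (nhds ((2 * Real.pi) ^ (-q / 2))) := by
  have hq0 : (0:ℝ) < q := by linarith
  set d : ℝ := 1 / 2 - (1 - γ) / q with hd_def
  have hd : 0 < d := by
    have h5 : (1 - γ) / q < 1 / 2 := by
      rw [div_lt_iff₀ hq0]; nlinarith
    simp only [hd_def]; linarith
  -- basic facts for n ≥ 1
  have hpt : ∀ n : ℕ, (n : ℝ) + 1 / 2 - (1 - γ) / q = (n : ℝ) + d := by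
    intro n; rw [hd_def]; ring
  have hexp : ∀ n : ℕ, q * n + q / 2 - (1 - γ) = q * ((n : ℝ) + d) := by
    intro n; rw [hd_def]; field_simp; ring
  constructor
  · -- maximality
    intro n hn r hr
    simp only [Set.mem_Ioi] at hr
    simp only [Set.mem_setOf_eq]
    have ha : (0:ℝ) < (n : ℝ) + 1 / 2 - (1 - γ) / q := by
      rw [hpt n]; positivity
    have hfac : (0:ℝ) < ((n.factorial : ℝ)) ^ q :=
      Real.rpow_pos_of_pos (by exact_mod_cast n.factorial_pos) q
    have key := key_max q ((n : ℝ) + 1 / 2 - (1 - γ) / q) r hq0 ha hr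
    rw [hexp n, ← hpt n] at *
    gcongr
  · -- the limit
    set G : ℕ → ℝ := fun n =>
      ((1 + d / (n : ℝ)) ^ ((n : ℝ) + d) * Real.exp (-d) /
        (Real.sqrt 2 * Stirling.stirlingSeq n)) ^ q with hG_def
    have hden : Tendsto (fun n : ℕ => Real.sqrt 2 * Stirling.stirlingSeq n) atTop
        (𝓝 (Real.sqrt 2 * Real.sqrt π)) :=
      tendsto_const_nhds.mul Stirling.tendsto_stirlingSeq_sqrt_pi
    have hnum : Tendsto (fun n : ℕ => (1 + d / (n : ℝ)) ^ ((n : ℝ) + d) * Real.exp (-d))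
        atTop (𝓝 (Real.exp d * Real.exp (-d))) := (one_plus_lim d hd).mul tendsto_const_nhds
    have hne : Real.sqrt 2 * Real.sqrt π ≠ 0 := by positivity
    have hinner := hnum.div hden hne
    have hval : Real.exp d * Real.exp (-d) / (Real.sqrt 2 * Real.sqrt π)
        = (2 * π) ^ (-(1/2) : ℝ) := by
      rw [← Real.exp_add, add_neg_cancel, Real.exp_zero,
        ← Real.sqrt_mul (by norm_num : (0:ℝ) ≤ 2),
        Real.sqrt_eq_rpow, Real.rpow_neg (by positivity), one_div]
    rw [hval] at hinner
    have hGlim : Tendsto G atTop (𝓝 ((2 * π) ^ (-q / 2))) := by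
      have h6 := hinner.rpow_const (p := q) (Or.inl (by positivity))
      convert h6 using 2
      · rfl
      rw [← Real.rpow_mul (by positivity)]
      congr 1
      ring
    apply hGlim.congr'
    filter_upwards [eventually_ge_atTop 1] with n hn
    -- now prove G n = F n
    have hN : (0:ℝ) < (n : ℝ) := by exact_mod_cast Nat.lt_of_lt_of_le Nat.zero_lt_one hn
    have h1d : (0:ℝ) < 1 + d / (n : ℝ) := by positivity
    have hA : (0:ℝ) < (n : ℝ) + 1 / 2 - (1 - γ) / q := by rw [hpt n]; positivity
    have hB : (0:ℝ) < (n.factorial : ℝ) := by exact_mod_cast n.factorial_pos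
    have hs : 0 < Stirling.stirlingSeq n := by
      rw [Stirling.stirlingSeq]
      have h2n : (0:ℝ) < Real.sqrt (2 * n) := Real.sqrt_pos.2 (by positivity)
      exact div_pos hB (mul_pos h2n (pow_pos (div_pos hN (Real.exp_pos 1)) n))
    have hInner : 0 < (1 + d / (n : ℝ)) ^ ((n : ℝ) + d) * Real.exp (-d) /
        (Real.sqrt 2 * Stirling.stirlingSeq n) :=
      div_pos (mul_pos (Real.rpow_pos_of_pos h1d _) (Real.exp_pos _))
        (mul_pos (Real.sqrt_pos.2 two_pos) hs)
    have hGpos : 0 < G n := Real.rpow_pos_of_pos hInner q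
    have hFpos : 0 < (n : ℝ) ^ (1 - γ) *
        (((n : ℝ) + 1 / 2 - (1 - γ) / q) ^ (q * n + q / 2 - (1 - γ)) *
          Real.exp (-q * ((n : ℝ) + 1 / 2 - (1 - γ) / q)) / (n.factorial : ℝ) ^ q) :=
      mul_pos (Real.rpow_pos_of_pos hN _)
        (div_pos (mul_pos (Real.rpow_pos_of_pos hA _) (Real.exp_pos _))
          (Real.rpow_pos_of_pos hB _))
    apply Real.log_injOn_pos (Set.mem_Ioi.2 hGpos) (Set.mem_Ioi.2 hFpos)
    have hAeq : (n : ℝ) + 1 / 2 - (1 - γ) / q = (n : ℝ) * (1 + d / (n : ℝ)) := by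
      rw [hd_def]; field_simp; ring
    simp only [hG_def]
    rw [Real.log_rpow hInner,
      Real.log_div (mul_pos (Real.rpow_pos_of_pos h1d _) (Real.exp_pos _)).ne'
        (mul_pos (Real.sqrt_pos.2 two_pos) hs).ne',
      Real.log_mul (Real.rpow_pos_of_pos h1d _).ne' (Real.exp_pos _).ne',
      Real.log_rpow h1d, Real.log_exp,
      Real.log_mul (Real.sqrt_pos.2 two_pos).ne' hs.ne',
      Real.log_sqrt (by norm_num : (0:ℝ) ≤ 2),
      Stirling.log_stirlingSeq_formula,
      Real.log_mul two_ne_zero hN.ne',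
      Real.log_div hN.ne' (Real.exp_ne_zero 1),
      Real.log_mul (Real.rpow_pos_of_pos hN _).ne'
        (div_pos (mul_pos (Real.rpow_pos_of_pos hA _) (Real.exp_pos _))
          (Real.rpow_pos_of_pos hB _)).ne',
      Real.log_rpow hN,
      Real.log_div (mul_pos (Real.rpow_pos_of_pos hA _) (Real.exp_pos _)).ne'
        (Real.rpow_pos_of_pos hB _).ne',
      Real.log_mul (Real.rpow_pos_of_pos hA _).ne' (Real.exp_pos _).ne',
      hAeq, Real.log_rpow (by rw [← hAeq]; exact hA),
      Real.log_mul hN.ne' h1d.ne', Real.log_exp,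
      Real.log_rpow hB]
    simp only [Real.log_exp]
    rw [hd_def]
    field_simp
    ring
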